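/- Let p > q be primes with p ≡ 1 (mod q) and g of multiplicative order q modulo p. Define on A = ℤ_p × ℤ_q the operations (n,m) + (s,t) = (n+s, m+t) and (n,m) ∘ (s,t) = (n + g^m s, m+t). Then (A, +, ∘) is a bi-skew brace with abelian additive group and multiplicative group isomorphic to ℤ_p ⋊_g ℤ_q, and it is the unique (up to isomorphism) non-trivial skew brace of order pq with cyclic additive group. -/

import Mathlib

/-- `(op, e, inv)` is a group structure on `A`. -/
def IsGroupOp {A : Type*} (op : A → A → A) (e : A) (inv : A → A) : Prop :=
  (∀ a b c, op (op a b) c = op a (op b c)) ∧ (∀ a, op e a = a) ∧ (∀ a, op a e = a) ∧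
  (∀ a, op (inv a) a = e) ∧ (∀ a, op a (inv a) = e)

/-- `(A, add, mul)` is a skew left brace: both operations are group operations and
`a ∘ (b + c) = (a ∘ b - a) + a ∘ c`. -/
def IsSkewBrace {A : Type*} (add : A → A → A) (zero : A) (neg : A → A)
    (mul : A → A → A) (one : A) (inv : A → A) : Prop :=
  IsGroupOp add zero neg ∧ IsGroupOp mul one inv ∧
  ∀ a b c, mul a (add b c) = add (add (mul a b) (neg a)) (mul a c)

theorem unique_aux (p q : ℕ) (hp : p.Prime) (hq : q.Prime) (hlt : q < p)
    (g : ZMod p) (hg : orderOf g = q)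
    (A : Type) (add : A → A → A) (zero : A) (neg : A → A)
    (mul : A → A → A) (one : A) (inv : A → A)
    (hSB : IsSkewBrace add zero neg mul one inv)
    (hcyc : ∃ e : A ≃ ZMod (p * q), ∀ a b, e (add a b) = e a + e b)
    (hnt : ∃ a b, mul a b ≠ add a b) :
    ∃ e : A ≃ ZMod p × ZMod q, (∀ a b, e (add a b) = e a + e b) ∧
      (∀ a b, e (mul a b) =
        ((e a).1 + g ^ (e a).2.val * (e b).1, (e a).2 + (e b).2)) := by
  haveI : Fact p.Prime := ⟨hp⟩
  haveI : Fact q.Prime := ⟨hq⟩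
  haveI : NeZero (p * q) := ⟨Nat.mul_ne_zero hp.pos.ne' hq.pos.ne'⟩
  -- basic facts about g
  have hgq : g ^ q = 1 := by rw [← hg]; exact pow_orderOf_eq_one g
  have hg0 : g ≠ 0 := by
    intro h
    rw [h, zero_pow hq.ne_zero] at hgq
    exact one_ne_zero hgq.symm
  have hpow : ∀ a b : ZMod q, g ^ (a + b).val = g ^ a.val * g ^ b.val := by
    intro a b
    have h := pow_mod_orderOf g (a.val + b.val)
    rw [hg] at h
    rw [ZMod.val_add, h, pow_add]
  have hinj0 : ∀ a b : ℕ, a ≤ b → b < q → g ^ a = g ^ b → a = b := by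
    intro a b hab hb he
    obtain ⟨c, rfl⟩ := Nat.exists_eq_add_of_le hab
    rw [pow_add] at he
    have h1 : g ^ a * 1 = g ^ a * g ^ c := by rw [mul_one]; exact he
    have h2 : g ^ c = 1 := (mul_left_cancel₀ (pow_ne_zero a hg0) h1).symm
    have h3 : q ∣ c := hg ▸ orderOf_dvd_of_pow_eq_one h2
    have h4 : c = 0 := by
      by_contra hc
      have := Nat.le_of_dvd (Nat.pos_of_ne_zero hc) h3
      omega
    omega
  have hinj : ∀ a b : ℕ, a < q → b < q → g ^ a = g ^ b → a = b := by
    intro a b ha hb he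
    rcases le_total a b with h | h
    · exact hinj0 a b h hb he
    · exact (hinj0 b a h ha he.symm).symm
  obtain ⟨⟨aassoc, azero, zeroa, nega, aneg⟩, ⟨massoc, onem, mone, invm, minv⟩, hbr⟩ := hSB
  obtain ⟨e₀, he₀⟩ := hcyc
  have hz : e₀ zero = 0 := by
    have h := he₀ zero zero
    rw [azero] at h
    have h2 : e₀ zero + 0 = e₀ zero + e₀ zero := by rw [add_zero]; exact h
    exact (add_left_cancel h2).symm
  have hng : ∀ a, e₀ (neg a) = -(e₀ a) := by
    intro a
    have h := he₀ (neg a) a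
    rw [nega a, hz] at h
    exact eq_neg_of_add_eq_zero_left h.symm
  set M : ZMod (p * q) → ZMod (p * q) → ZMod (p * q) :=
    fun x y => e₀ (mul (e₀.symm x) (e₀.symm y)) with hM
  have hMassoc : ∀ x y z, M (M x y) z = M x (M y z) := by
    intro x y z
    simp only [hM, Equiv.symm_apply_apply]
    rw [massoc]
  have hMbr : ∀ x y z, M x (y + z) = M x y + -x + M x z := by
    intro x y z
    have hyz : e₀.symm (y + z) = add (e₀.symm y) (e₀.symm z) := by
      apply e₀.injective
      rw [he₀, Equiv.apply_symm_apply, Equiv.apply_symm_apply, Equiv.apply_symm_apply]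
    have h := hbr (e₀.symm x) (e₀.symm y) (e₀.symm z)
    simp only [hM]
    rw [hyz, h, he₀, he₀, hng, Equiv.apply_symm_apply]
  have hM0 : ∀ x, M x 0 = x := by
    intro x
    have h := hMbr x 0 0
    rw [add_zero] at h
    have h2 : M x 0 + 0 = M x 0 + (-x + M x 0) := by
      rw [add_zero, ← add_assoc]; exact h
    have h3 := add_left_cancel h2
    exact (calc x = x + 0 := (add_zero x).symm
    _ = x + (-x + M x 0) := by rw [← h3]
    _ = M x 0 := by rw [← add_assoc, add_neg_cancel, zero_add]).symm
  have hE0 : e₀ one = 0 := by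
    have h1 : M (e₀ one) 0 = 0 := by
      simp only [hM, Equiv.symm_apply_apply]
      rw [onem]
      exact e₀.apply_symm_apply 0
    rw [hM0] at h1
    exact h1
  have hMid : ∀ y, M 0 y = y := by
    intro y
    rw [← hE0]
    simp only [hM, Equiv.symm_apply_apply]
    rw [onem]
    exact e₀.apply_symm_apply y
  set I : ZMod (p * q) → ZMod (p * q) := fun x => e₀ (inv (e₀.symm x)) with hI
  have hMinvl : ∀ x, M (I x) x = 0 := by
    intro x
    simp only [hM, hI, Equiv.symm_apply_apply]
    rw [invm]
    exact hE0
  have hMinvr : ∀ x, M x (I x) = 0 := by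
    intro x
    simp only [hM, hI, Equiv.symm_apply_apply]
    rw [minv]
    exact hE0
  set u : ZMod (p * q) → ZMod (p * q) := fun x => M x 1 - x with hu
  have hMu : ∀ x y, M x y = x + u x * y := by
    intro x y
    have fadd : ∀ y z, (M x (y + z) - x) = (M x y - x) + (M x z - x) := by
      intro y z
      have h := hMbr x y z
      linear_combination h
    let f : ZMod (p * q) →+ ZMod (p * q) := AddMonoidHom.mk' (fun y => M x y - x) fadd
    have h1 : ((y.val : ℕ) : ZMod (p * q)) = y := by rw [ZMod.natCast_val, ZMod.cast_id]
    have h2 : f y = y * f 1 := by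
      calc f y = f (y.val • (1 : ZMod (p * q))) := by rw [nsmul_eq_mul, mul_one, h1]
      _ = y.val • f 1 := AddMonoidHom.map_nsmul f y.val 1
      _ = ((y.val : ℕ) : ZMod (p * q)) * f 1 := nsmul_eq_mul _ _
      _ = y * f 1 := by rw [h1]
    have h3 : M x y - x = y * (M x 1 - x) := h2
    simp only [hu]
    linear_combination h3
  have hu0 : u 0 = 1 := by
    simp only [hu]
    rw [hMid]
    ring
  have humul : ∀ x y, u (M x y) = u x * u y := by
    intro x y
    set w := M x y with hw
    have h := hMassoc x y 1
    rw [← hw, hMu w 1, hMu x (M y 1), hMu y 1] at h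
    have hw2 : w = x + u x * y := by rw [hw, hMu]
    linear_combination h - hw2
  have huunit : ∀ x, IsUnit (u x) := by
    intro x
    have hy : M x (M (I x) (x + 1)) = x + 1 := by rw [← hMassoc, hMinvr, hMid]
    rw [hMu] at hy
    exact isUnit_iff_exists_inv.mpr ⟨M (I x) (x + 1), by linear_combination hy⟩
  have hupow : ∀ x, u x ^ (p * q) = 1 := by
    intro x
    have σl : ∀ y, M (I x) (M x y) = y := by
      intro y; rw [← hMassoc, hMinvl, hMid]
    have σr : ∀ z, M x (M (I x) z) = z := by
      intro z; rw [← hMassoc, hMinvr, hMid]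
    let σ : Equiv (ZMod (p * q)) (ZMod (p * q)) := ⟨fun y => M x y, fun z => M (I x) z, σl, σr⟩
    have h1 : ∏ y : ZMod (p * q), u (σ y) = ∏ y : ZMod (p * q), u y := Equiv.prod_comp σ u
    have h2 : ∏ y : ZMod (p * q), u (σ y) = u x ^ (p * q) * ∏ y : ZMod (p * q), u y := by
      calc ∏ y : ZMod (p * q), u (σ y) = ∏ y : ZMod (p * q), (u x * u y) :=
        Finset.prod_congr rfl (fun y _ => humul x y)
      _ = (∏ _y : ZMod (p * q), u x) * ∏ y : ZMod (p * q), u y := Finset.prod_mul_distrib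
      _ = u x ^ (p * q) * ∏ y : ZMod (p * q), u y := by
        rw [Finset.prod_const, Finset.card_univ, ZMod.card]
    have hP : IsUnit (∏ y : ZMod (p * q), u y) := by
      choose v hv using huunit
      refine ⟨∏ y : ZMod (p * q), v y, ?_⟩
      calc ((∏ y : ZMod (p * q), v y : (ZMod (p * q))ˣ) : ZMod (p * q))
          = ∏ y : ZMod (p * q), ((v y : (ZMod (p * q))ˣ) : ZMod (p * q)) :=
        map_prod (Units.coeHom (ZMod (p * q))) v Finset.univ
      _ = ∏ y : ZMod (p * q), u y := Finset.prod_congr rfl (fun y _ => hv y)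
    exact IsUnit.mul_right_cancel hP (by rw [one_mul, ← h2, h1])
  have hco : Nat.Coprime p q := (Nat.coprime_primes hp hq).mpr (ne_of_gt hlt)
  set χ : ZMod (p * q) ≃+* (ZMod p × ZMod q) := ZMod.chineseRemainder hco with hχ
  set F : A ≃ (ZMod p × ZMod q) := e₀.trans χ.toEquiv with hF0
  have hF : ∀ a b, F (add a b) = F a + F b := by
    intro a b
    show χ (e₀ (add a b)) = χ (e₀ a) + χ (e₀ b)
    rw [he₀, map_add]
  set M' : (ZMod p × ZMod q) → (ZMod p × ZMod q) → (ZMod p × ZMod q) :=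
    fun x y => χ (M (χ.symm x) (χ.symm y)) with hM'
  have hFmul : ∀ a b, F (mul a b) = M' (F a) (F b) := by
    intro a b
    show χ (e₀ (mul a b)) = χ (M (χ.symm (χ (e₀ a))) (χ.symm (χ (e₀ b))))
    rw [RingEquiv.symm_apply_apply, RingEquiv.symm_apply_apply]
    simp only [hM, Equiv.symm_apply_apply]
  set u' : (ZMod p × ZMod q) → (ZMod p × ZMod q) := fun x => χ (u (χ.symm x)) with hu'
  have hM'u : ∀ x y, M' x y = x + u' x * y := by
    intro x y
    simp only [hM', hu']
    rw [hMu, map_add, map_mul, RingEquiv.apply_symm_apply, RingEquiv.apply_symm_apply]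
  have hu'm : ∀ x y, u' (M' x y) = u' x * u' y := by
    intro x y
    simp only [hM', hu', RingEquiv.symm_apply_apply]
    rw [humul, map_mul]
  have hu'pow : ∀ x, u' x ^ (p * q) = 1 := by
    intro x
    simp only [hu']
    rw [← map_pow, hupow, map_one]
  have hu'unit : ∀ x, IsUnit (u' x) := fun x => (huunit _).map χ
  have hu2 : ∀ x, (u' x).2 = 1 := by
    intro x
    have hunit2 : IsUnit (u' x).2 := (hu'unit x).map (RingHom.snd (ZMod p) (ZMod q))
    have hne : (u' x).2 ≠ 0 := hunit2.ne_zero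
    have h1 : (u' x).2 ^ (q - 1) = 1 := ZMod.pow_card_sub_one_eq_one hne
    have h2 : (u' x).2 ^ (p * q) = 1 := by
      have := congrArg Prod.snd (hu'pow x)
      simpa using this
    have hd1 : orderOf (u' x).2 ∣ q - 1 := orderOf_dvd_of_pow_eq_one h1
    have hd2 : orderOf (u' x).2 ∣ p * q := orderOf_dvd_of_pow_eq_one h2
    have hc1 : Nat.Coprime p (q - 1) := hp.coprime_iff_not_dvd.mpr (fun h => by
      have h2q : 2 ≤ q := hq.two_le
      have := Nat.le_of_dvd (by omega) h
      omega)
    have hc2 : Nat.Coprime q (q - 1) := hq.coprime_iff_not_dvd.mpr (fun h => by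
      have h2q : 2 ≤ q := hq.two_le
      have := Nat.le_of_dvd (by omega) h
      omega)
    have hcop : Nat.Coprime (p * q) (q - 1) := Nat.Coprime.mul hc1 hc2
    have hdvd1 : orderOf (u' x).2 ∣ 1 := hcop ▸ Nat.dvd_gcd hd2 hd1
    exact orderOf_eq_one_iff.mp (Nat.dvd_one.mp hdvd1)
  have hu1q : ∀ x, (u' x).1 ^ q = 1 := by
    intro x
    have hunit1 : IsUnit (u' x).1 := (hu'unit x).map (RingHom.fst (ZMod p) (ZMod q))
    have hne : (u' x).1 ≠ 0 := hunit1.ne_zero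
    have h1 : (u' x).1 ^ (p - 1) = 1 := ZMod.pow_card_sub_one_eq_one hne
    have h2 : (u' x).1 ^ (p * q) = 1 := by
      have := congrArg Prod.fst (hu'pow x)
      simpa using this
    have hd1 : orderOf (u' x).1 ∣ p - 1 := orderOf_dvd_of_pow_eq_one h1
    have hd2 : orderOf (u' x).1 ∣ p * q := orderOf_dvd_of_pow_eq_one h2
    have hcp : Nat.Coprime (p - 1) p := (hp.coprime_iff_not_dvd.mpr (fun h => by
      have h2p : 2 ≤ p := hp.two_le
      have := Nat.le_of_dvd (by omega) h
      omega)).symm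
    have hdp : Nat.Coprime (orderOf (u' x).1) p := Nat.Coprime.coprime_dvd_left hd1 hcp
    have hdq : orderOf (u' x).1 ∣ q := hdp.dvd_of_dvd_mul_left hd2
    exact orderOf_dvd_iff_pow_eq_one.mp hdq
  have hprim : IsPrimitiveRoot g q := hg ▸ IsPrimitiveRoot.orderOf g
  choose κnat hκlt hκg using fun x => hprim.eq_pow_of_pow_eq_one (hu1q x)
  set κ : (ZMod p × ZMod q) → ZMod q := fun x => ((κnat x : ℕ) : ZMod q) with hκdef
  have hκval : ∀ x, (κ x).val = κnat x := by
    intro x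
    simp only [hκdef]
    rw [ZMod.val_natCast, Nat.mod_eq_of_lt (hκlt x)]
  have hκ : ∀ x, g ^ (κ x).val = (u' x).1 := by
    intro x
    rw [hκval]
    exact hκg x
  have hκeq : ∀ (s : ZMod q) (x), g ^ s.val = (u' x).1 → κ x = s := by
    intro s x h
    apply ZMod.val_injective q
    exact hinj _ _ (ZMod.val_lt _) (ZMod.val_lt _) (by rw [hκ x, ← h])
  have hκadd : ∀ x y, κ (M' x y) = κ x + κ y := by
    intro x y
    refine (hκeq (κ x + κ y) (M' x y) ?_).trans rfl
    calc g ^ (κ x + κ y).val = (u' x).1 * (u' y).1 := by rw [hpow, hκ, hκ]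
    _ = (u' (M' x y)).1 := by rw [hu'm]; rfl
  have hM'c : ∀ x y, M' x y = (x.1 + g ^ (κ x).val * y.1, x.2 + y.2) := by
    intro x y
    rw [hM'u]
    refine Prod.ext ?_ ?_
    · show x.1 + (u' x).1 * y.1 = x.1 + g ^ (κ x).val * y.1
      rw [hκ]
    · show x.2 + (u' x).2 * y.2 = x.2 + y.2
      rw [hu2, one_mul]
  have hκ10 : ∀ w : ZMod p, κ (w, (0 : ZMod q)) = 0 := by
    intro w
    have hh0 : g ^ (κ (w, (0 : ZMod q))).val ≠ 0 := pow_ne_zero _ hg0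
    have hstep : ∀ y : ZMod p,
        κ (w + g ^ (κ (w, (0 : ZMod q))).val * y, (0 : ZMod q))
          = κ (w, (0 : ZMod q)) + κ (y, (0 : ZMod q)) := by
      intro y
      have h := hκadd (w, (0 : ZMod q)) (y, (0 : ZMod q))
      rw [hM'c] at h
      simpa using h
    have τl : ∀ y : ZMod p,
        (g ^ (κ (w, (0 : ZMod q))).val)⁻¹ * ((w + g ^ (κ (w, (0 : ZMod q))).val * y) - w) = y := by
      intro y
      field_simp
      ring
    have τr : ∀ z : ZMod p,
        w + g ^ (κ (w, (0 : ZMod q))).val * ((g ^ (κ (w, (0 : ZMod q))).val)⁻¹ * (z - w)) = z := by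
      intro z
      field_simp
      ring
    let τ : Equiv (ZMod p) (ZMod p) :=
      ⟨fun y => w + g ^ (κ (w, (0 : ZMod q))).val * y,
       fun z => (g ^ (κ (w, (0 : ZMod q))).val)⁻¹ * (z - w), τl, τr⟩
    have hp1 : ∏ y : ZMod p, g ^ (κ (τ y, (0 : ZMod q))).val
        = ∏ y : ZMod p, g ^ (κ (y, (0 : ZMod q))).val :=
      Equiv.prod_comp τ (fun y => g ^ (κ (y, (0 : ZMod q))).val)
    have hp2 : ∏ y : ZMod p, g ^ (κ (τ y, (0 : ZMod q))).val
        = (g ^ (κ (w, (0 : ZMod q))).val) ^ p * ∏ y : ZMod p, g ^ (κ (y, (0 : ZMod q))).val := by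
      calc ∏ y : ZMod p, g ^ (κ (τ y, (0 : ZMod q))).val
          = ∏ y : ZMod p, (g ^ (κ (w, (0 : ZMod q))).val * g ^ (κ (y, (0 : ZMod q))).val) := by
            refine Finset.prod_congr rfl (fun y _ => ?_)
            show g ^ (κ (w + g ^ (κ (w, (0 : ZMod q))).val * y, (0 : ZMod q))).val = _
            rw [hstep y, hpow]
      _ = _ * _ := Finset.prod_mul_distrib
      _ = (g ^ (κ (w, (0 : ZMod q))).val) ^ p * ∏ y : ZMod p, g ^ (κ (y, (0 : ZMod q))).val := by
            rw [Finset.prod_const, Finset.card_univ, ZMod.card]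
    have hPne : (∏ y : ZMod p, g ^ (κ (y, (0 : ZMod q))).val) ≠ 0 :=
      Finset.prod_ne_zero_iff.mpr (fun y _ => pow_ne_zero _ hg0)
    have hhp : (g ^ (κ (w, (0 : ZMod q))).val) ^ p = 1 := by
      have h := hp2.symm.trans hp1
      have h2 : (g ^ (κ (w, (0 : ZMod q))).val) ^ p * (∏ y : ZMod p, g ^ (κ (y, (0 : ZMod q))).val)
          = 1 * (∏ y : ZMod p, g ^ (κ (y, (0 : ZMod q))).val) := by rw [one_mul]; exact h
      exact mul_right_cancel₀ hPne h2
    have hhq : (g ^ (κ (w, (0 : ZMod q))).val) ^ q = 1 := by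
      rw [← pow_mul, mul_comm, pow_mul, hgq, one_pow]
    have hord : orderOf (g ^ (κ (w, (0 : ZMod q))).val) ∣ 1 :=
      hco ▸ Nat.dvd_gcd (orderOf_dvd_of_pow_eq_one hhp) (orderOf_dvd_of_pow_eq_one hhq)
    have hh1 : g ^ (κ (w, (0 : ZMod q))).val = 1 := orderOf_eq_one_iff.mp (Nat.dvd_one.mp hord)
    apply ZMod.val_injective q
    refine hinj _ _ (ZMod.val_lt _) (ZMod.val_lt _) ?_
    rw [hh1, ZMod.val_zero, pow_zero]
  have hκp : ∀ x : ZMod p × ZMod q, κ x = κ ((0 : ZMod p), x.2) := by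
    intro x
    have hk0 : (g ^ (κ ((0 : ZMod p), x.2)).val) ≠ 0 := pow_ne_zero _ hg0
    have hx : M' ((0 : ZMod p), x.2) ((g ^ (κ ((0 : ZMod p), x.2)).val)⁻¹ * x.1, (0 : ZMod q)) = x := by
      rw [hM'c]
      refine Prod.ext ?_ ?_
      · show (0 : ZMod p) + g ^ (κ ((0 : ZMod p), x.2)).val
            * ((g ^ (κ ((0 : ZMod p), x.2)).val)⁻¹ * x.1) = x.1
        field_simp
        ring
      · exact add_zero x.2
    calc κ x = κ (M' ((0 : ZMod p), x.2) ((g ^ (κ ((0 : ZMod p), x.2)).val)⁻¹ * x.1, (0 : ZMod q))) := by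
          rw [hx]
    _ = κ ((0 : ZMod p), x.2) + κ ((g ^ (κ ((0 : ZMod p), x.2)).val)⁻¹ * x.1, (0 : ZMod q)) :=
          hκadd _ _
    _ = κ ((0 : ZMod p), x.2) := by rw [hκ10, add_zero]
  have hκlin : ∀ t : ZMod q, κ ((0 : ZMod p), t) = t * κ ((0 : ZMod p), (1 : ZMod q)) := by
    have hadd : ∀ s t : ZMod q, κ ((0 : ZMod p), s + t)
        = κ ((0 : ZMod p), s) + κ ((0 : ZMod p), t) := by
      intro s t
      have h := hκadd ((0 : ZMod p), s) ((0 : ZMod p), t)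
      rw [hM'c] at h
      simpa using h
    intro t
    let f : ZMod q →+ ZMod q := AddMonoidHom.mk' (fun t => κ ((0 : ZMod p), t)) hadd
    have h1 : ((t.val : ℕ) : ZMod q) = t := by rw [ZMod.natCast_val, ZMod.cast_id]
    calc κ ((0 : ZMod p), t) = f t := rfl
    _ = f (t.val • (1 : ZMod q)) := by rw [nsmul_eq_mul, mul_one, h1]
    _ = t.val • f 1 := AddMonoidHom.map_nsmul f t.val 1
    _ = ((t.val : ℕ) : ZMod q) * f 1 := nsmul_eq_mul _ _
    _ = t * κ ((0 : ZMod p), (1 : ZMod q)) := by rw [h1]; rfl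
  have hκc : ∀ x : ZMod p × ZMod q, κ x = κ ((0 : ZMod p), (1 : ZMod q)) * x.2 := by
    intro x
    rw [hκp x, hκlin x.2, mul_comm]
  obtain ⟨a₀, b₀, hab⟩ := hnt
  have hc0 : κ ((0 : ZMod p), (1 : ZMod q)) ≠ 0 := by
    intro h0
    apply hab
    apply F.injective
    rw [hFmul, hF, hM'c, hκc, h0, zero_mul]
    refine Prod.ext ?_ ?_
    · show (F a₀).1 + g ^ (0 : ZMod q).val * (F b₀).1 = (F a₀ + F b₀).1
      rw [ZMod.val_zero, pow_zero, one_mul]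
      rfl
    · rfl
  have hcne : κ ((0 : ZMod p), (1 : ZMod q)) ≠ 0 := hc0
  have sl : ∀ x : ZMod p × ZMod q,
      ((x.1, (κ ((0 : ZMod p), (1 : ZMod q)))⁻¹ * (κ ((0 : ZMod p), (1 : ZMod q)) * x.2))
        : ZMod p × ZMod q) = x := by
    intro x
    refine Prod.ext rfl ?_
    show (κ ((0 : ZMod p), (1 : ZMod q)))⁻¹ * (κ ((0 : ZMod p), (1 : ZMod q)) * x.2) = x.2
    field_simp
  have sr : ∀ x : ZMod p × ZMod q,
      ((x.1, κ ((0 : ZMod p), (1 : ZMod q)) * ((κ ((0 : ZMod p), (1 : ZMod q)))⁻¹ * x.2))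
        : ZMod p × ZMod q) = x := by
    intro x
    refine Prod.ext rfl ?_
    show κ ((0 : ZMod p), (1 : ZMod q)) * ((κ ((0 : ZMod p), (1 : ZMod q)))⁻¹ * x.2) = x.2
    field_simp
  let s : Equiv (ZMod p × ZMod q) (ZMod p × ZMod q) :=
    ⟨fun x => (x.1, κ ((0 : ZMod p), (1 : ZMod q)) * x.2),
     fun x => (x.1, (κ ((0 : ZMod p), (1 : ZMod q)))⁻¹ * x.2), sl, sr⟩
  refine ⟨F.trans s, ?_, ?_⟩
  · intro a b
    show s (F (add a b)) = s (F a) + s (F b)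
    rw [hF]
    refine Prod.ext rfl ?_
    show κ ((0 : ZMod p), (1 : ZMod q)) * (F a + F b).2
        = κ ((0 : ZMod p), (1 : ZMod q)) * (F a).2 + κ ((0 : ZMod p), (1 : ZMod q)) * (F b).2
    rw [Prod.snd_add, mul_add]
  · intro a b
    show s (F (mul a b)) = _
    rw [hFmul, hM'c]
    refine Prod.ext ?_ ?_
    · show (F a).1 + g ^ (κ (F a)).val * (F b).1
          = (F a).1 + g ^ (κ ((0 : ZMod p), (1 : ZMod q)) * (F a).2).val * (F b).1
      rw [hκc]
    · show κ ((0 : ZMod p), (1 : ZMod q)) * ((F a).2 + (F b).2)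
          = κ ((0 : ZMod p), (1 : ZMod q)) * (F a).2 + κ ((0 : ZMod p), (1 : ZMod q)) * (F b).2
      exact mul_add _ _ _

/-- Let `p > q` be primes with `p ≡ 1 (mod q)` and `g` of multiplicative order `q`
mod `p`.  On `A = ℤ_p × ℤ_q` with componentwise addition and
`(n,m) ∘ (s,t) = (n + g^m s, m + t)`, the triple `(A,+,∘)` is a bi-skew brace with
abelian additive group, whose multiplicative group is isomorphic to `ℤ_p ⋊_g ℤ_q`;
it is non-trivial, and it is the unique non-trivial skew brace of order `pq` with
cyclic additive group, up to isomorphism. -/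
theorem stmt14 (p q : ℕ) (hp : p.Prime) (hq : q.Prime) (hlt : q < p)
    (hmod : p % q = 1) (g : ZMod p) (hg : orderOf g = q)
    (φ : Multiplicative (ZMod q) →* MulAut (Multiplicative (ZMod p)))
    (hφ : ∀ (m : ZMod q) (n : ZMod p),
      φ (Multiplicative.ofAdd m) (Multiplicative.ofAdd n) =
        Multiplicative.ofAdd (g ^ m.val * n)) :
    IsSkewBrace
      (fun x y : ZMod p × ZMod q => x + y) 0 (fun x => -x)
      (fun x y : ZMod p × ZMod q => (x.1 + g ^ x.2.val * y.1, x.2 + y.2)) 0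
      (fun x : ZMod p × ZMod q => (-(g ^ (q - x.2.val) * x.1), -x.2)) ∧
    IsSkewBrace
      (fun x y : ZMod p × ZMod q => (x.1 + g ^ x.2.val * y.1, x.2 + y.2)) 0
      (fun x : ZMod p × ZMod q => (-(g ^ (q - x.2.val) * x.1), -x.2))
      (fun x y : ZMod p × ZMod q => x + y) 0 (fun x => -x) ∧
    (∀ x y : ZMod p × ZMod q, x + y = y + x) ∧
    (∃ e : ZMod p × ZMod q → (Multiplicative (ZMod p) ⋊[φ] Multiplicative (ZMod q)),
      Function.Bijective e ∧
      ∀ x y : ZMod p × ZMod q,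
        e (x.1 + g ^ x.2.val * y.1, x.2 + y.2) = e x * e y) ∧
    (∃ x y : ZMod p × ZMod q, (x.1 + g ^ x.2.val * y.1, x.2 + y.2) ≠ x + y) ∧
    (∀ (A : Type) (add : A → A → A) (zero : A) (neg : A → A)
        (mul : A → A → A) (one : A) (inv : A → A),
      IsSkewBrace add zero neg mul one inv →
      (∃ e : A ≃ ZMod (p * q), ∀ a b, e (add a b) = e a + e b) →
      (∃ a b, mul a b ≠ add a b) →
      ∃ e : A ≃ ZMod p × ZMod q, (∀ a b, e (add a b) = e a + e b) ∧
        (∀ a b, e (mul a b) =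
          ((e a).1 + g ^ (e a).2.val * (e b).1, (e a).2 + (e b).2))) := by
  haveI : Fact p.Prime := ⟨hp⟩
  haveI : Fact q.Prime := ⟨hq⟩
  haveI : Fact (1 < q) := ⟨hq.one_lt⟩
  have hgq : g ^ q = 1 := by rw [← hg]; exact pow_orderOf_eq_one g
  have hg0 : g ≠ 0 := by
    intro h
    rw [h, zero_pow hq.ne_zero] at hgq
    exact one_ne_zero hgq.symm
  have hpow : ∀ a b : ZMod q, g ^ (a + b).val = g ^ a.val * g ^ b.val := by
    intro a b
    have h := pow_mod_orderOf g (a.val + b.val)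
    rw [hg] at h
    rw [ZMod.val_add, h, pow_add]
  have hsub : ∀ a : ZMod q, g ^ (q - a.val) * g ^ a.val = 1 := by
    intro a
    rw [← pow_add, Nat.sub_add_cancel (le_of_lt (ZMod.val_lt a)), hgq]
  have hneg : ∀ a : ZMod q, g ^ (-a).val = g ^ (q - a.val) := by
    intro a
    have h1 : g ^ (-a).val * g ^ a.val = 1 := by
      rw [← hpow, neg_add_cancel]
      simp
    exact mul_right_cancel₀ (pow_ne_zero _ hg0) (h1.trans (hsub a).symm)
  have hGrpMul : IsGroupOp
      (fun x y : ZMod p × ZMod q => (x.1 + g ^ x.2.val * y.1, x.2 + y.2)) 0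
      (fun x : ZMod p × ZMod q => (-(g ^ (q - x.2.val) * x.1), -x.2)) := by
    refine ⟨?_, ?_, ?_, ?_, ?_⟩
    · intro a b c
      refine Prod.ext ?_ ?_
      · show a.1 + g ^ a.2.val * b.1 + g ^ (a.2 + b.2).val * c.1
          = a.1 + g ^ a.2.val * (b.1 + g ^ b.2.val * c.1)
        rw [hpow]; ring
      · exact add_assoc a.2 b.2 c.2
    · intro a
      refine Prod.ext ?_ ?_
      · show (0 : ZMod p) + g ^ (0 : ZMod q).val * a.1 = a.1
        simp
      · exact zero_add a.2
    · intro a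
      refine Prod.ext ?_ ?_
      · show a.1 + g ^ a.2.val * 0 = a.1
        simp
      · exact add_zero a.2
    · intro a
      refine Prod.ext ?_ ?_
      · show -(g ^ (q - a.2.val) * a.1) + g ^ (-a.2).val * a.1 = 0
        rw [hneg]; ring
      · exact neg_add_cancel a.2
    · intro a
      refine Prod.ext ?_ ?_
      · show a.1 + g ^ a.2.val * (-(g ^ (q - a.2.val) * a.1)) = 0
        linear_combination (-a.1) * hsub a.2
      · exact add_neg_cancel a.2
  refine ⟨?_, ?_, fun x y => add_comm x y, ?_, ?_, ?_⟩
  · refine ⟨⟨fun a b c => add_assoc a b c, zero_add, add_zero, neg_add_cancel, add_neg_cancel⟩,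
      hGrpMul, ?_⟩
    intro a b c
    refine Prod.ext ?_ ?_
    · show a.1 + g ^ a.2.val * (b.1 + c.1)
        = a.1 + g ^ a.2.val * b.1 + -a.1 + (a.1 + g ^ a.2.val * c.1)
      ring
    · show a.2 + (b.2 + c.2) = a.2 + b.2 + -a.2 + (a.2 + c.2)
      ring
  · refine ⟨hGrpMul,
      ⟨fun a b c => add_assoc a b c, zero_add, add_zero, neg_add_cancel, add_neg_cancel⟩, ?_⟩
    intro a b c
    refine Prod.ext ?_ ?_
    · show a.1 + (b.1 + g ^ b.2.val * c.1)
        = a.1 + b.1 + g ^ (a.2 + b.2).val * (-(g ^ (q - a.2.val) * a.1))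
            + g ^ ((a.2 + b.2) + -a.2).val * (a.1 + c.1)
      have h2 : (a.2 + b.2) + -a.2 = b.2 := by ring
      rw [h2, hpow]
      linear_combination (g ^ b.2.val * a.1) * hsub a.2
    · show a.2 + (b.2 + c.2) = (a.2 + b.2) + -a.2 + (a.2 + c.2)
      ring
  · refine ⟨fun x => ⟨Multiplicative.ofAdd x.1, Multiplicative.ofAdd x.2⟩, ⟨?_, ?_⟩, ?_⟩
    · intro a b h
      have h1 := congrArg SemidirectProduct.left h
      have h2 := congrArg SemidirectProduct.right h
      exact Prod.ext h1 h2
    · intro z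
      exact ⟨(z.left.toAdd, z.right.toAdd), by cases z; rfl⟩
    · intro x y
      refine SemidirectProduct.ext ?_ ?_
      · show Multiplicative.ofAdd (x.1 + g ^ x.2.val * y.1)
          = Multiplicative.ofAdd x.1 * φ (Multiplicative.ofAdd x.2) (Multiplicative.ofAdd y.1)
        rw [hφ, ← ofAdd_add]
      · rfl
  · refine ⟨(0, 1), (1, 0), ?_⟩
    intro h
    have h1 := congrArg Prod.fst h
    simp [ZMod.val_one] at h1
    have : orderOf g = 1 := by rw [h1, orderOf_one]
    rw [hg] at this
    exact (Nat.Prime.one_lt hq).ne' this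
  · intro A add zero neg mul one inv hSB hcyc hnt
    exact unique_aux p q hp hq hlt g hg A add zero neg mul one inv hSB hcyc hnt
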